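/- Let φ be a holomorphic function on a connected open set U ⊆ ℂ^m invariant under Z ↦ σ(Z) for the orthogonal reflection σ in a hyperplane λ^⊥ (with (λ,λ) ≠ 0), such that Δφ = 0 for the Laplace operator Δ of the bilinear form, and φ vanishes to order ≥ 2 along λ^⊥ (i.e., φ(zλ + Z') = O(z²)). Then φ is identically zero. -/

import Mathlib

open Finset

/-- Partial derivative in the `j`-th coordinate of a function on `Fin m → ℂ`. -/
noncomputable def pd {m : ℕ} (j : Fin m) (g : (Fin m → ℂ) → ℂ) : (Fin m → ℂ) → ℂ :=
  fun Z => deriv (fun u => g (Function.update Z j u)) (Z j)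

namespace Stmt9Aux

variable {m : ℕ}

/-- Directional derivative. -/
noncomputable def Dd (v : Fin m → ℂ) (f : (Fin m → ℂ) → ℂ) : (Fin m → ℂ) → ℂ :=
  fun z => fderiv ℂ f z v

lemma Dd_analytic {f : (Fin m → ℂ) → ℂ} {U : Set (Fin m → ℂ)}
    (hf : AnalyticOnNhd ℂ f U) (v : Fin m → ℂ) : AnalyticOnNhd ℂ (Dd v f) U :=
  fun z hz => ((ContinuousLinearMap.apply ℂ ℂ v).analyticAt _).comp (hf z hz).fderiv

lemma Dd_congr {f g : (Fin m → ℂ) → ℂ} {U : Set (Fin m → ℂ)} (hU : IsOpen U)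
    (h : ∀ z ∈ U, f z = g z) (v : Fin m → ℂ) {z : Fin m → ℂ} (hz : z ∈ U) :
    Dd v f z = Dd v g z := by
  have he : f =ᶠ[nhds z] g := Filter.eventuallyEq_of_mem (hU.mem_nhds hz) h
  simp only [Dd, he.fderiv_eq]

lemma Dd_Dd_eq {U : Set (Fin m → ℂ)} {f : (Fin m → ℂ) → ℂ}
    (hf : AnalyticOnNhd ℂ f U) (u v : Fin m → ℂ) {z : Fin m → ℂ} (hz : z ∈ U) :
    Dd u (Dd v f) z = fderiv ℂ (fderiv ℂ f) z u v := by
  have hd : DifferentiableAt ℂ (fderiv ℂ f) z := ((hf z hz).fderiv).differentiableAt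
  have key : fderiv ℂ (fun y => fderiv ℂ f y v) z = (fderiv ℂ (fderiv ℂ f) z).flip v := by
    have := fderiv_clm_apply (𝕜 := ℂ) hd (differentiableAt_const v)
    simpa using this
  show fderiv ℂ (fun y => fderiv ℂ f y v) z u = _
  rw [key]
  rfl

lemma Dd_swap {U : Set (Fin m → ℂ)} {f : (Fin m → ℂ) → ℂ}
    (hf : AnalyticOnNhd ℂ f U) (u v : Fin m → ℂ) {z : Fin m → ℂ} (hz : z ∈ U) :
    Dd u (Dd v f) z = Dd v (Dd u f) z := by
  rw [Dd_Dd_eq hf u v hz, Dd_Dd_eq hf v u hz]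
  exact ((hf z hz).contDiffAt (n := 2)).isSymmSndFDerivAt (by norm_num) u v

lemma deriv_line {f : (Fin m → ℂ) → ℂ} (z v : Fin m → ℂ) (hf : DifferentiableAt ℂ f z) :
    deriv (fun t : ℂ => f (z + t • v)) 0 = Dd v f z := by
  have hg : HasDerivAt (fun t : ℂ => z + t • v) v 0 := by
    have h1 : HasDerivAt (fun t : ℂ => t • v) ((1 : ℂ) • v) 0 :=
      (hasDerivAt_id (0 : ℂ)).smul_const v
    simpa using h1.const_add z
  have hf' : HasFDerivAt f (fderiv ℂ f z) ((fun t : ℂ => z + t • v) 0) := by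
    simpa using hf.hasFDerivAt
  have := hf'.comp_hasDerivAt 0 hg
  exact this.deriv

/-- Tangential derivative of a function vanishing on `U ∩ {ℓ = 0}` vanishes there. -/
lemma tangential {U : Set (Fin m → ℂ)} (hU : IsOpen U) {f : (Fin m → ℂ) → ℂ}
    (hf : ∀ z ∈ U, DifferentiableAt ℂ f z)
    {ℓ : (Fin m → ℂ) → ℂ} (hℓ : ∀ (z w : Fin m → ℂ) (t : ℂ), ℓ (z + t • w) = ℓ z + t * ℓ w)
    (hvanS : ∀ z ∈ U, ℓ z = 0 → f z = 0)
    {v : Fin m → ℂ} (hv : ℓ v = 0) {z : Fin m → ℂ} (hz : z ∈ U) (hzS : ℓ z = 0) :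
    Dd v f z = 0 := by
  have hcont : Continuous (fun t : ℂ => z + t • v) := by continuity
  have hz0 : (fun t : ℂ => z + t • v) 0 ∈ U := by simpa using hz
  have hUt : ∀ᶠ t in nhds (0 : ℂ), z + t • v ∈ U :=
    hcont.continuousAt.preimage_mem_nhds (hU.mem_nhds hz0)
  have h0 : (fun t : ℂ => f (z + t • v)) =ᶠ[nhds (0 : ℂ)] fun _ => 0 := by
    filter_upwards [hUt] with t ht
    exact hvanS _ ht (by rw [hℓ, hzS, hv, mul_zero, add_zero])
  rw [← deriv_line z v (hf z hz), h0.deriv_eq, deriv_const]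

lemma update_eq (z : Fin m → ℂ) (j : Fin m) (u : ℂ) :
    Function.update z j u = z + (u - z j) • (Pi.single j 1 : Fin m → ℂ) := by
  ext k
  by_cases h : k = j
  · subst h; simp
  · simp [Function.update_apply, h, Pi.single_apply]

lemma pd_congr {U : Set (Fin m → ℂ)} (hU : IsOpen U) {f g : (Fin m → ℂ) → ℂ}
    (h : ∀ z ∈ U, f z = g z) (i : Fin m) {z : Fin m → ℂ} (hz : z ∈ U) :
    pd i f z = pd i g z := by
  have hcont : Continuous (fun u : ℂ => Function.update z i u) := by
    simp only [update_eq]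
    continuity
  have hz0 : Function.update z i (z i) ∈ U := by rwa [Function.update_eq_self]
  have hUt : ∀ᶠ u in nhds (z i), Function.update z i u ∈ U :=
    hcont.continuousAt.preimage_mem_nhds (hU.mem_nhds hz0)
  have he : (fun u => f (Function.update z i u)) =ᶠ[nhds (z i)]
      fun u => g (Function.update z i u) := by
    filter_upwards [hUt] with u hu using h _ hu
  exact he.deriv_eq

lemma pd_eq_Dd {f : (Fin m → ℂ) → ℂ} (j : Fin m) {z : Fin m → ℂ}
    (hf : DifferentiableAt ℂ f z) : pd j f z = Dd (Pi.single j 1) f z := by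
  have hg : HasDerivAt (fun u : ℂ => z + (u - z j) • (Pi.single j 1 : Fin m → ℂ))
      (Pi.single j 1) (z j) := by
    have h1 : HasDerivAt (fun u : ℂ => (u - z j) • (Pi.single j 1 : Fin m → ℂ))
        ((1 : ℂ) • (Pi.single j 1 : Fin m → ℂ)) (z j) :=
      ((hasDerivAt_id (z j)).sub_const (z j)).smul_const _
    simpa using h1.const_add z
  have hf' : HasFDerivAt f (fderiv ℂ f z)
      ((fun u : ℂ => z + (u - z j) • (Pi.single j 1 : Fin m → ℂ)) (z j)) := by
    simpa using hf.hasFDerivAt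
  have hcomp := hf'.comp_hasDerivAt (z j) hg
  have heq : (fun u : ℂ => f (Function.update z j u))
      = fun u : ℂ => f (z + (u - z j) • (Pi.single j 1 : Fin m → ℂ)) := by
    funext u; rw [update_eq]
  rw [pd, heq]
  exact hcomp.deriv

lemma sum_single (v : Fin m → ℂ) : ∑ i, v i • (Pi.single i 1 : Fin m → ℂ) = v := by
  ext k
  rw [Finset.sum_apply]
  simp [Pi.single_apply]

lemma bilin_decomp (Q : Matrix (Fin m) (Fin m) ℂ) (lam μ : Fin m → ℂ) (c : ℂ)
    (hc : c ≠ 0)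
    (h1 : ∀ i, ∑ j, Q i j * μ j = lam i)
    (h2 : ∀ j, ∑ i, Q i j * μ i = lam j)
    (h3 : ∑ i, μ i * lam i = c)
    (H : (Fin m → ℂ) →L[ℂ] (Fin m → ℂ) →L[ℂ] ℂ) :
    ∑ i, ∑ j, Q i j * H (Pi.single i 1) (Pi.single j 1)
      = c⁻¹ * H lam lam
        + ∑ i, ∑ j, Q i j * H (Pi.single i 1 + (-(μ i / c)) • lam)
            (Pi.single j 1 + (-(μ j / c)) • lam) := by
  have hH1 : ∀ w, ∑ i, lam i * H (Pi.single i 1) w = H lam w := by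
    intro w
    conv_rhs => rw [← sum_single lam]
    rw [map_sum, ContinuousLinearMap.sum_apply]
    exact Finset.sum_congr rfl fun i _ => by
      rw [map_smul, ContinuousLinearMap.smul_apply, smul_eq_mul]
  have hH2 : ∀ w, ∑ j, lam j * H w (Pi.single j 1) = H w lam := by
    intro w
    conv_rhs => rw [← sum_single lam]
    rw [map_sum]
    exact Finset.sum_congr rfl fun j _ => by rw [map_smul, smul_eq_mul]
  have hexp : ∀ i j, Q i j * H (Pi.single i 1 + (-(μ i / c)) • lam)
      (Pi.single j 1 + (-(μ j / c)) • lam)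
      = Q i j * H (Pi.single i 1) (Pi.single j 1)
        + (-(c⁻¹)) * (Q i j * μ j * H (Pi.single i 1) lam)
        + (-(c⁻¹)) * (Q i j * μ i * H lam (Pi.single j 1))
        + c⁻¹ * c⁻¹ * (Q i j * μ i * μ j * H lam lam) := by
    intro i j
    simp only [map_add, map_smul, ContinuousLinearMap.add_apply,
      ContinuousLinearMap.smul_apply, smul_eq_mul]
    field_simp
    ring
  have hS2 : ∑ i, ∑ j, Q i j * μ j * H (Pi.single i 1) lam = H lam lam := by
    rw [← hH1 lam]
    refine Finset.sum_congr rfl fun i _ => ?_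
    rw [← Finset.sum_mul, h1]
  have hS3 : ∑ i, ∑ j, Q i j * μ i * H lam (Pi.single j 1) = H lam lam := by
    rw [← hH2 lam, Finset.sum_comm]
    refine Finset.sum_congr rfl fun j _ => ?_
    rw [← Finset.sum_mul, h2]
  have hS4 : ∑ i, ∑ j, Q i j * μ i * μ j * H lam lam = c * H lam lam := by
    rw [← h3, Finset.sum_mul]
    refine Finset.sum_congr rfl fun i _ => ?_
    have hkey : ∑ j, Q i j * μ i * μ j = μ i * lam i := by
      rw [← h1 i, Finset.mul_sum]
      exact Finset.sum_congr rfl fun j _ => by ring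
    rw [← Finset.sum_mul, hkey]
  have expand : ∑ i, ∑ j, Q i j * H (Pi.single i 1 + (-(μ i / c)) • lam)
      (Pi.single j 1 + (-(μ j / c)) • lam)
      = ∑ i, ∑ j, Q i j * H (Pi.single i 1) (Pi.single j 1)
        + (-(c⁻¹)) * (∑ i, ∑ j, Q i j * μ j * H (Pi.single i 1) lam)
        + (-(c⁻¹)) * (∑ i, ∑ j, Q i j * μ i * H lam (Pi.single j 1))
        + c⁻¹ * c⁻¹ * (∑ i, ∑ j, Q i j * μ i * μ j * H lam lam) := by
    simp only [hexp, Finset.sum_add_distrib, Finset.mul_sum]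
  rw [expand, hS2, hS3, hS4]
  field_simp
  ring

/-- A continuous multilinear map vanishing on tuples from `{lam} ∪ ker ℓ` vanishes. -/
lemma multilinear_zero {n : ℕ}
    (M : ContinuousMultilinearMap ℂ (fun _ : Fin n => (Fin m → ℂ)) ℂ)
    (lam : Fin m → ℂ) (ℓ : (Fin m → ℂ) → ℂ) (c : ℂ) (hc : c ≠ 0) (hℓlam : ℓ lam = c)
    (hℓ : ∀ (z w : Fin m → ℂ) (t : ℂ), ℓ (z + t • w) = ℓ z + t * ℓ w)
    (hgood : ∀ w : Fin n → (Fin m → ℂ), (∀ i, w i = lam ∨ ℓ (w i) = 0) → M w = 0) :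
    ∀ w, M w = 0 := by
  have aux : ∀ k : ℕ, ∀ w : Fin n → (Fin m → ℂ),
      (∀ i : Fin n, k ≤ (i : ℕ) → (w i = lam ∨ ℓ (w i) = 0)) → M w = 0 := by
    intro k
    induction k with
    | zero => exact fun w hw => hgood w fun i => hw i (Nat.zero_le _)
    | succ k ih =>
      intro w hw
      by_cases hk : k < n
      · set i₀ : Fin n := ⟨k, hk⟩
        set v := w i₀
        set u := v + (-(ℓ v / c)) • lam with hu
        have hℓu : ℓ u = 0 := by
          rw [hu, hℓ, hℓlam]
          field_simp
          ring
        have hv : v = (ℓ v / c) • lam + u := by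
          rw [hu, neg_smul]; abel
        have hw' : w = Function.update w i₀ v := by
          rw [Function.update_eq_self]
        rw [hw', hv, M.map_update_add, M.map_update_smul]
        have z1 : M (Function.update w i₀ lam) = 0 := by
          apply ih
          intro i hi
          rcases eq_or_ne i i₀ with rfl | hne
          · rw [Function.update_self]; exact Or.inl rfl
          · rw [Function.update_of_ne hne]
            refine hw i ?_
            rcases Nat.lt_or_ge (i : ℕ) (k + 1) with h | h
            · exact absurd (Fin.ext (Nat.le_antisymm (Nat.lt_succ_iff.mp h) hi)) hne
            · exact h
        have z2 : M (Function.update w i₀ u) = 0 := by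
          apply ih
          intro i hi
          rcases eq_or_ne i i₀ with rfl | hne
          · rw [Function.update_self]; exact Or.inr hℓu
          · rw [Function.update_of_ne hne]
            refine hw i ?_
            rcases Nat.lt_or_ge (i : ℕ) (k + 1) with h | h
            · exact absurd (Fin.ext (Nat.le_antisymm (Nat.lt_succ_iff.mp h) hi)) hne
            · exact h
        rw [z1, z2, smul_zero, add_zero]
      · apply ih
        intro i hi
        exact absurd (lt_of_le_of_lt hi i.isLt) hk
  intro w
  exact aux n w fun i hi => absurd (lt_of_le_of_lt hi i.isLt) (lt_irrefl n)

/-- Iterated derivative as nested directional derivatives. -/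
lemma iteratedFDeriv_eq_foldr {U : Set (Fin m → ℂ)} (hU : IsOpen U) :
    ∀ (n : ℕ) (f : (Fin m → ℂ) → ℂ), AnalyticOnNhd ℂ f U → ∀ z ∈ U,
      ∀ w : Fin n → (Fin m → ℂ),
        iteratedFDeriv ℂ n f z w = ((List.ofFn w).foldr Dd f) z := by
  intro n
  induction n with
  | zero =>
    intro f hf z hz w
    simp [iteratedFDeriv_zero_apply]
  | succ n ih =>
    intro f hf z hz w
    have h1 : iteratedFDeriv ℂ (n + 1) f z w
        = iteratedFDeriv ℂ n (fun y => fderiv ℂ f y) z (Fin.init w) (w (Fin.last n)) :=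
      iteratedFDeriv_succ_apply_right w
    set g : ((Fin m → ℂ) →L[ℂ] ℂ) →L[ℂ] ℂ := ContinuousLinearMap.apply ℂ ℂ (w (Fin.last n))
    have hfd : AnalyticOnNhd ℂ (fderiv ℂ f) U := hf.fderiv
    have hcd : ContDiffOn ℂ (n : ℕ∞) (fderiv ℂ f) U :=
      (hfd.contDiffOn hU.uniqueDiffOn).of_le le_top
    have h2 : iteratedFDerivWithin ℂ n (g ∘ fderiv ℂ f) U z
        = g.compContinuousMultilinearMap (iteratedFDerivWithin ℂ n (fderiv ℂ f) U z) :=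
      g.iteratedFDerivWithin_comp_left (hcd z hz) hU.uniqueDiffOn hz le_rfl
    have h3 : iteratedFDeriv ℂ n (g ∘ fderiv ℂ f) z
        = g.compContinuousMultilinearMap (iteratedFDeriv ℂ n (fderiv ℂ f) z) := by
      rw [← iteratedFDerivWithin_of_isOpen n hU hz, ← iteratedFDerivWithin_of_isOpen n hU hz, h2]
    have h4 : g ∘ fderiv ℂ f = Dd (w (Fin.last n)) f := rfl
    have h5 : iteratedFDeriv ℂ n (fun y => fderiv ℂ f y) z (Fin.init w) (w (Fin.last n))
        = iteratedFDeriv ℂ n (Dd (w (Fin.last n)) f) z (Fin.init w) := by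
      rw [← h4, h3]; rfl
    rw [h1, h5, ih (Dd (w (Fin.last n)) f) (Dd_analytic hf _) z hz (Fin.init w)]
    have h6 : List.ofFn w = (List.ofFn (Fin.init w)).concat (w (Fin.last n)) := by
      rw [List.ofFn_succ']
      rfl
    rw [h6, List.concat_eq_append, List.foldr_append]
    rfl

end Stmt9Aux

open Stmt9Aux

theorem stmt_9 {m : ℕ} (G : Matrix (Fin m) (Fin m) ℂ) (hG : G.IsSymm) (hGnd : IsUnit G.det)
    (Bf : (Fin m → ℂ) → (Fin m → ℂ) → ℂ)
    (hBf : Bf = fun x y => ∑ i, ∑ j, G i j * x i * y j)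
    (lam : Fin m → ℂ) (hlam : Bf lam lam ≠ 0)
    (σ : (Fin m → ℂ) → (Fin m → ℂ))
    (hσ : σ = fun Z => Z - (2 * Bf lam Z / Bf lam lam) • lam)
    (U : Set (Fin m → ℂ)) (hUopen : IsOpen U) (hUconn : IsPreconnected U)
    (hUσ : ∀ Z ∈ U, σ Z ∈ U)
    (hmeet : ∃ Z ∈ U, Bf lam Z = 0)
    (φ : (Fin m → ℂ) → ℂ) (hφan : AnalyticOnNhd ℂ φ U)
    (hinv : ∀ Z ∈ U, φ (σ Z) = φ Z)
    (hharm : ∀ Z ∈ U, ∑ i, ∑ j, (G⁻¹) i j * pd i (pd j φ) Z = 0)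
    (hvan : ∀ Z ∈ U, Bf lam Z = 0 →
      φ Z = 0 ∧ deriv (fun t : ℂ => φ (Z + t • lam)) 0 = 0) :
    ∀ Z ∈ U, φ Z = 0 := by
  classical
  obtain ⟨Z₀, hZ₀U, hZ₀ℓ⟩ := hmeet
  set c : ℂ := Bf lam lam with hc_def
  have hc : c ≠ 0 := hlam
  set μ : Fin m → ℂ := fun j => ∑ i, G i j * lam i with hμ_def
  have hBfeq : ∀ z : Fin m → ℂ, Bf lam z = ∑ j, μ j * z j := by
    intro z
    rw [hBf]
    dsimp only
    rw [Finset.sum_comm]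
    exact Finset.sum_congr rfl fun j _ => (Finset.sum_mul _ _ _).symm
  have hℓlin : ∀ (z w : Fin m → ℂ) (t : ℂ), Bf lam (z + t • w) = Bf lam z + t * Bf lam w := by
    intro z w t
    simp only [hBfeq]
    rw [Finset.mul_sum, ← Finset.sum_add_distrib]
    refine Finset.sum_congr rfl fun j _ => ?_
    simp only [Pi.add_apply, Pi.smul_apply, smul_eq_mul]
    ring
  have hℓe : ∀ j, Bf lam (Pi.single j 1) = μ j := by
    intro j
    rw [hBfeq]
    rw [Finset.sum_eq_single j]
    · simp
    · intro b _ hb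
      simp [Pi.single_apply, hb]
    · intro h; exact absurd (Finset.mem_univ j) h
  -- matrix facts
  have hμvec : μ = G.mulVec lam := by
    funext j
    rw [hμ_def]
    simp only [Matrix.mulVec, dotProduct]
    exact Finset.sum_congr rfl fun i _ => by rw [hG.apply]
  have h1 : ∀ i, ∑ j, (G⁻¹) i j * μ j = lam i := by
    intro i
    have hv : (G⁻¹).mulVec μ = lam := by
      rw [hμvec, Matrix.mulVec_mulVec, Matrix.nonsing_inv_mul G hGnd, Matrix.one_mulVec]
    have := congrFun hv i
    simpa [Matrix.mulVec, dotProduct] using this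
  have hGinvsymm : ∀ i j, (G⁻¹) i j = (G⁻¹) j i := by
    intro i j
    have h : (G⁻¹).transpose = G⁻¹ := by rw [Matrix.transpose_nonsing_inv, hG.eq]
    calc (G⁻¹) i j = (G⁻¹).transpose j i := (Matrix.transpose_apply _ _ _).symm
    _ = (G⁻¹) j i := by rw [h]
  have h2 : ∀ j, ∑ i, (G⁻¹) i j * μ i = lam j := by
    intro j
    rw [show ∑ i, (G⁻¹) i j * μ i = ∑ i, (G⁻¹) j i * μ i from
      Finset.sum_congr rfl fun i _ => by rw [hGinvsymm]]
    exact h1 j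
  have h3 : ∑ i, μ i * lam i = c := (hBfeq lam).symm
  -- tangential vectors
  have hℓt : ∀ i, Bf lam (Pi.single i 1 + (-(μ i / c)) • lam) = 0 := by
    intro i
    have : Pi.single i 1 + (-(μ i / c)) • lam
        = (Pi.single i 1 : Fin m → ℂ) + (-(μ i / c)) • lam := rfl
    rw [show (Pi.single i 1 : Fin m → ℂ) + (-(μ i / c)) • lam
        = (Pi.single i 1 : Fin m → ℂ) + (-(μ i / c)) • lam from rfl]
    rw [hℓlin, hℓe, ← hc_def]
    field_simp
    ring
  -- B sequence
  set B : ℕ → (Fin m → ℂ) → ℂ := fun n => (fun g => Dd lam g)^[n] φ with hB_def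
  have hB0 : B 0 = φ := rfl
  have hBsucc : ∀ n, B (n + 1) = Dd lam (B n) := fun n =>
    Function.iterate_succ_apply' (fun g => Dd lam g) n φ
  have hBan : ∀ n, AnalyticOnNhd ℂ (B n) U := by
    intro n
    induction n with
    | zero => exact hφan
    | succ n ih => rw [hBsucc]; exact Dd_analytic ih lam
  -- harmonicity of φ in Dd form
  have hharm' : ∀ z ∈ U,
      ∑ i, ∑ j, (G⁻¹) i j * Dd (Pi.single i 1) (Dd (Pi.single j 1) φ) z = 0 := by
    intro z hz
    rw [← hharm z hz]
    refine Finset.sum_congr rfl fun i _ => Finset.sum_congr rfl fun j _ => ?_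
    congr 1
    have hDdj : AnalyticOnNhd ℂ (Dd (Pi.single j 1) φ) U := Dd_analytic hφan _
    have hpd : ∀ y ∈ U, pd j φ y = Dd (Pi.single j 1) φ y := fun y hy =>
      pd_eq_Dd j ((hφan y hy).differentiableAt)
    rw [pd_congr hUopen hpd i hz, pd_eq_Dd i ((hDdj z hz).differentiableAt)]
  -- harmonicity propagates to all B n
  have hBharm : ∀ n, ∀ z ∈ U,
      ∑ i, ∑ j, (G⁻¹) i j * Dd (Pi.single i 1) (Dd (Pi.single j 1) (B n)) z = 0 := by
    intro n
    induction n with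
    | zero => exact hharm'
    | succ n ih =>
      intro z hz
      rw [hBsucc]
      set f := B n
      have hf : AnalyticOnNhd ℂ f U := hBan n
      have hstep : ∀ i j : Fin m, Dd (Pi.single i 1) (Dd (Pi.single j 1) (Dd lam f)) z
          = Dd lam (Dd (Pi.single i 1) (Dd (Pi.single j 1) f)) z := by
        intro i j
        have e1 : ∀ y ∈ U, Dd (Pi.single j 1) (Dd lam f) y
            = Dd lam (Dd (Pi.single j 1) f) y := fun y hy => Dd_swap hf _ _ hy
        rw [Dd_congr hUopen e1 _ hz]
        exact Dd_swap (Dd_analytic hf _) _ _ hz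
      have hras : ∀ i j : Fin m,
          Dd lam (Dd (Pi.single i 1) (Dd (Pi.single j 1) f)) z
          = fderiv ℂ (fun y => Dd (Pi.single i 1) (Dd (Pi.single j 1) f) y) z lam :=
        fun i j => rfl
      have hdiff : ∀ i j : Fin m, ∀ y ∈ U,
          DifferentiableAt ℂ (fun y' => Dd (Pi.single i 1) (Dd (Pi.single j 1) f) y') y :=
        fun i j y hy => ((Dd_analytic (Dd_analytic hf _) _) y hy).differentiableAt
      have hsumD : HasFDerivAt
          (fun y => ∑ i, ∑ j, (G⁻¹) i j * Dd (Pi.single i 1) (Dd (Pi.single j 1) f) y)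
          (∑ i, ∑ j, (G⁻¹) i j • fderiv ℂ
            (fun y => Dd (Pi.single i 1) (Dd (Pi.single j 1) f) y) z) z := by
        refine HasFDerivAt.fun_sum fun i _ => HasFDerivAt.fun_sum fun j _ => ?_
        exact ((hdiff i j z hz).hasFDerivAt).const_mul _
      have hzero : (fun y => ∑ i, ∑ j, (G⁻¹) i j
          * Dd (Pi.single i 1) (Dd (Pi.single j 1) f) y) =ᶠ[nhds z] fun _ => 0 :=
        Filter.eventuallyEq_of_mem (hUopen.mem_nhds hz) fun y hy => ih y hy
      have hD0 : (∑ i, ∑ j, (G⁻¹) i j • fderiv ℂ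
          (fun y => Dd (Pi.single i 1) (Dd (Pi.single j 1) f) y) z) = 0 := by
        rw [← hsumD.fderiv, hzero.fderiv_eq]
        exact fderiv_const_apply 0
      have hfin : ∑ i, ∑ j, (G⁻¹) i j * Dd (Pi.single i 1) (Dd (Pi.single j 1) (Dd lam f)) z
          = (∑ i, ∑ j, (G⁻¹) i j • fderiv ℂ
              (fun y => Dd (Pi.single i 1) (Dd (Pi.single j 1) f) y) z) lam := by
        rw [ContinuousLinearMap.sum_apply]
        refine Finset.sum_congr rfl fun i _ => ?_
        rw [ContinuousLinearMap.sum_apply]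
        refine Finset.sum_congr rfl fun j _ => ?_
        rw [ContinuousLinearMap.smul_apply, smul_eq_mul, hstep i j]
        rfl
      rw [hfin, hD0]
      simp
  -- vanishing of all B n on U ∩ {Bf lam = 0}
  have hvan0 : ∀ z ∈ U, Bf lam z = 0 → φ z = 0 := fun z hz h0 => (hvan z hz h0).1
  have hBvan : ∀ n, ∀ z ∈ U, Bf lam z = 0 → B n z = 0 := by
    intro n
    induction n using Nat.strong_induction_on with
    | _ n ih =>
      match n with
      | 0 => exact hvan0
      | 1 =>
        intro z hz h0
        have hb1 : B 1 = Dd lam φ := hBsucc 0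
        rw [hb1, ← deriv_line z lam ((hφan z hz).differentiableAt)]
        exact (hvan z hz h0).2
      | (n + 2) =>
        intro z hz h0
        have ihn : ∀ y ∈ U, Bf lam y = 0 → B n y = 0 := fun y hy hy0 =>
          ih n (by omega) y hy hy0
        have hT1 : ∀ j, ∀ y ∈ U, Bf lam y = 0 →
            Dd (Pi.single j 1 + (-(μ j / c)) • lam) (B n) y = 0 := fun j y hy hy0 =>
          tangential hUopen (fun y' hy' => ((hBan n) y' hy').differentiableAt) hℓlin
            ihn (hℓt j) hy hy0
        have hT2 : ∀ i j, Dd (Pi.single i 1 + (-(μ i / c)) • lam)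
            (Dd (Pi.single j 1 + (-(μ j / c)) • lam) (B n)) z = 0 := fun i j =>
          tangential hUopen
            (fun y' hy' => ((Dd_analytic (hBan n) _) y' hy').differentiableAt) hℓlin
            (hT1 j) (hℓt i) hz h0
        have hDD : ∀ u v, Dd u (Dd v (B n)) z = fderiv ℂ (fderiv ℂ (B n)) z u v :=
          fun u v => Dd_Dd_eq (hBan n) u v hz
        have hbd := bilin_decomp (G⁻¹) lam μ c hc h1 h2 h3 (fderiv ℂ (fderiv ℂ (B n)) z)
        rw [show ∑ i, ∑ j, (G⁻¹) i j * (fderiv ℂ (fderiv ℂ (B n)) z) (Pi.single i 1)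
              (Pi.single j 1)
            = ∑ i, ∑ j, (G⁻¹) i j * Dd (Pi.single i 1) (Dd (Pi.single j 1) (B n)) z from
          Finset.sum_congr rfl fun i _ => Finset.sum_congr rfl fun j _ => by rw [hDD],
          hBharm n z hz] at hbd
        rw [show ∑ i, ∑ j, (G⁻¹) i j * (fderiv ℂ (fderiv ℂ (B n)) z)
              (Pi.single i 1 + (-(μ i / c)) • lam) (Pi.single j 1 + (-(μ j / c)) • lam)
            = ∑ i, ∑ j, (G⁻¹) i j * Dd (Pi.single i 1 + (-(μ i / c)) • lam)
              (Dd (Pi.single j 1 + (-(μ j / c)) • lam) (B n)) z from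
          Finset.sum_congr rfl fun i _ => Finset.sum_congr rfl fun j _ => by rw [hDD]] at hbd
        rw [show ∑ i, ∑ j, (G⁻¹) i j * Dd (Pi.single i 1 + (-(μ i / c)) • lam)
              (Dd (Pi.single j 1 + (-(μ j / c)) • lam) (B n)) z = 0 from
          Finset.sum_eq_zero fun i _ => Finset.sum_eq_zero fun j _ => by
            rw [hT2 i j, mul_zero], add_zero] at hbd
        have hlam2 : fderiv ℂ (fderiv ℂ (B n)) z lam lam = 0 := by
          rcases mul_eq_zero.mp hbd.symm with h | h
          · exact absurd h (inv_ne_zero hc)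
          · exact h
        rw [hBsucc (n + 1), hBsucc n]
        rw [show Dd lam (Dd lam (B n)) z = fderiv ℂ (fderiv ℂ (B n)) z lam lam from hDD lam lam]
        exact hlam2
  -- foldr machinery
  have hfold_an : ∀ (L : List (Fin m → ℂ)) (f : (Fin m → ℂ) → ℂ), AnalyticOnNhd ℂ f U →
      AnalyticOnNhd ℂ (L.foldr Dd f) U := by
    intro L
    induction L with
    | nil => exact fun f hf => hf
    | cons v L' ihL => exact fun f hf => Dd_analytic (ihL f hf) v
  have hcomm : ∀ (L : List (Fin m → ℂ)) (f : (Fin m → ℂ) → ℂ), AnalyticOnNhd ℂ f U →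
      ∀ z ∈ U, Dd lam (L.foldr Dd f) z = L.foldr Dd (Dd lam f) z := by
    intro L
    induction L with
    | nil => intro f _ z _; rfl
    | cons v L' ihL =>
      intro f hf z hz
      have hF : AnalyticOnNhd ℂ (L'.foldr Dd f) U := hfold_an L' f hf
      calc Dd lam ((v :: L').foldr Dd f) z = Dd lam (Dd v (L'.foldr Dd f)) z := rfl
      _ = Dd v (Dd lam (L'.foldr Dd f)) z := Dd_swap hF lam v hz
      _ = Dd v (L'.foldr Dd (Dd lam f)) z :=
        Dd_congr hUopen (fun y hy => ihL f hf y hy) v hz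
      _ = (v :: L').foldr Dd (Dd lam f) z := rfl
  have hR : ∀ L : List (Fin m → ℂ), (∀ v ∈ L, v = lam ∨ Bf lam v = 0) →
      ∀ n, ∀ z ∈ U, Bf lam z = 0 → (L.foldr Dd (B n)) z = 0 := by
    intro L
    induction L with
    | nil => exact fun _ n z hz h0 => hBvan n z hz h0
    | cons v L' ihL =>
      intro hLgood n z hz h0
      have hgood' : ∀ u ∈ L', u = lam ∨ Bf lam u = 0 := fun u hu =>
        hLgood u (List.mem_cons_of_mem _ hu)
      rcases hLgood v List.mem_cons_self with rfl | hv0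
      · show Dd v (L'.foldr Dd (B n)) z = 0
        rw [hcomm L' (B n) (hBan n) z hz, ← hBsucc n]
        exact ihL hgood' (n + 1) z hz h0
      · exact tangential hUopen
          (fun y hy => (hfold_an L' (B n) (hBan n) y hy).differentiableAt) hℓlin
          (fun y hy hy0 => ihL hgood' n y hy hy0) hv0 hz h0
  -- all iterated derivatives vanish at Z₀
  have hMzero : ∀ (n : ℕ) (w : Fin n → (Fin m → ℂ)), iteratedFDeriv ℂ n φ Z₀ w = 0 := by
    intro n
    have hgood : ∀ w : Fin n → (Fin m → ℂ), (∀ i, w i = lam ∨ Bf lam (w i) = 0) →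
        iteratedFDeriv ℂ n φ Z₀ w = 0 := by
      intro w hw
      rw [iteratedFDeriv_eq_foldr hUopen n φ hφan Z₀ hZ₀U w]
      refine hR (List.ofFn w) ?_ 0 Z₀ hZ₀U hZ₀ℓ
      intro v hv
      obtain ⟨i, rfl⟩ := List.mem_ofFn.mp hv
      exact hw i
    exact multilinear_zero (iteratedFDeriv ℂ n φ Z₀) lam (Bf lam) c hc rfl hℓlin hgood
  -- φ vanishes near Z₀
  obtain ⟨p, hp⟩ := hφan Z₀ hZ₀U
  obtain ⟨r, hpr⟩ := hp
  have hball : ∀ y ∈ Metric.eball (0 : Fin m → ℂ) r, φ (Z₀ + y) = 0 := by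
    intro y hy
    have hs := hpr.hasSum_iteratedFDeriv hy
    have hz : (fun n : ℕ => ((n.factorial : ℂ)⁻¹ • iteratedFDeriv ℂ n φ Z₀ fun _ => y))
        = fun _ => (0 : ℂ) := by
      funext n
      rw [hMzero n]
      simp
    rw [hz] at hs
    exact hs.unique hasSum_zero
  have hev : φ =ᶠ[nhds Z₀] 0 := by
    have hb : Metric.eball Z₀ r ∈ nhds Z₀ :=
      EMetric.isOpen_ball.mem_nhds (EMetric.mem_ball_self hpr.r_pos)
    filter_upwards [hb] with x hx
    have hx' : x - Z₀ ∈ Metric.eball (0 : Fin m → ℂ) r := by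
      rw [Metric.mem_eball] at hx ⊢
      rw [show (0 : Fin m → ℂ) = Z₀ - Z₀ by simp, edist_sub_right]
      exact hx
    simpa using hball (x - Z₀) hx'
  intro Z hZ
  exact hφan.eqOn_zero_of_preconnected_of_eventuallyEq_zero hUconn hZ₀U hev hZ
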